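/- Proposition (Toeplitz total positivity along rays of the generalized Delannoy triangle). Let a, b, c be nonnegative real numbers, and let n, k, δ, σ ∈ ℕ satisfy k ≤ n, 1 ≤ δ, k < σ and δ < σ. Then the Toeplitz matrix 𝒯(s) of the sequence s i = d (n + δ·i) (k + σ·i) is totally positive; in particular this sequence is a Pólya frequency sequence. -/
import Mathlib


open Finset

/-- An `ℕ × ℕ` matrix of real numbers is *totally positive* if every minor
taken along strictly increasing row and column indices is nonnegative. -/
def TPReal (A : ℕ → ℕ → ℝ) : Prop :=
  ∀ r : ℕ, 1 ≤ r → ∀ ρ κ : Fin r → ℕ, StrictMono ρ → StrictMono κ →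
    0 ≤ (Matrix.of fun i j : Fin r => A (ρ i) (κ j)).det

/-- The Toeplitz matrix of a sequence: `𝒯(c) i j = c (i - j)` for `i ≥ j`
and `0` otherwise. -/
def toeplitz (c : ℕ → ℝ) : ℕ → ℕ → ℝ :=
  fun i j => if j ≤ i then c (i - j) else 0

/-- The generalized Delannoy triangle `D_w(a,b,c)`:
`d 0 0 = 1`, `d 0 k = 0` for `k ≥ 1`, and for `n ≥ 1`,
`d n k = a·d (n-1) (k-1) + c·d (n-2) (k-1) + b·d (n-1) k`,
where any term with a negative index vanishes. -/
def genDelannoy (a b c : ℝ) : ℕ → ℕ → ℝ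
  | 0, 0 => 1
  | 0, _ + 1 => 0
  | n + 1, 0 => b * genDelannoy a b c n 0
  | 1, k + 1 => a * genDelannoy a b c 0 k + b * genDelannoy a b c 0 (k + 1)
  | n + 2, k + 1 =>
      a * genDelannoy a b c (n + 1) k + c * genDelannoy a b c n k +
        b * genDelannoy a b c (n + 1) (k + 1)
  termination_by n k => (k, n)

namespace DelRay
variable (a b c : ℝ)

lemma gd00 : genDelannoy a b c 0 0 = 1 := by rw [genDelannoy]
lemma gd0succ (k : ℕ) : genDelannoy a b c 0 (k+1) = 0 := by rw [genDelannoy]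
lemma gd_succ0 (n : ℕ) : genDelannoy a b c (n+1) 0 = b * genDelannoy a b c n 0 := by
  rw [genDelannoy]
lemma gd_1succ (k : ℕ) : genDelannoy a b c 1 (k+1)
    = a * genDelannoy a b c 0 k + b * genDelannoy a b c 0 (k+1) := by
  conv_lhs => rw [genDelannoy]
lemma gd_rec (n k : ℕ) : genDelannoy a b c (n+2) (k+1)
    = a * genDelannoy a b c (n+1) k + c * genDelannoy a b c n k
      + b * genDelannoy a b c (n+1) (k+1) := by rw [genDelannoy]

lemma gd_zero : ∀ n k : ℕ, n < k → genDelannoy a b c n k = 0 := by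
  intro n
  induction n using Nat.strong_induction_on with
  | _ n ih =>
    intro k hk
    match n, k with
    | 0, k+1 => exact gd0succ a b c k
    | 1, k+1 =>
      rw [gd_1succ]
      have h1 : genDelannoy a b c 0 k = 0 := by
        match k, hk with
        | k+1, _ => exact gd0succ a b c k
      rw [h1, gd0succ, mul_zero, mul_zero, add_zero]
    | n+2, k+1 =>
      rw [gd_rec, ih (n+1) (by omega) k (by omega), ih n (by omega) k (by omega),
        ih (n+1) (by omega) (k+1) (by omega)]
      ring



/-- A strictly monotone permutation of `Fin r` is the identity. -/
lemma strictMono_perm_eq_id {r : ℕ} (σ : Equiv.Perm (Fin r)) (h : StrictMono ⇑σ) :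
    ∀ i, σ i = i := by
  haveI : WellFoundedLT (Fin r) := inferInstance
  have hinv : StrictMono ⇑σ⁻¹ := by
    intro i i' hii
    rcases lt_trichotomy (σ⁻¹ i) (σ⁻¹ i') with hl | he | hg
    · exact hl
    · exact absurd (congrArg σ he) (by simp; omega)
    · have := h hg
      simp at this
      omega
  intro i
  have h1 : i ≤ σ i := h.le_apply
  have h2 : i ≤ σ⁻¹ i := hinv.le_apply
  have h3 : σ i ≤ σ (σ⁻¹ i) := h.monotone h2
  simp at h3
  exact le_antisymm h3 h1

/-- Nonnegativity of minors of the identity matrix. -/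
lemma tp_one {N r : ℕ} (ρ κ : Fin r → Fin N) (hρ : StrictMono ρ) (hκ : StrictMono κ) :
    0 ≤ (((1 : Matrix (Fin N) (Fin N) ℝ)).submatrix ρ κ).det := by
  by_cases h : ρ = κ
  · subst h
    have : ((1 : Matrix (Fin N) (Fin N) ℝ)).submatrix ρ ρ = 1 := by
      funext i j
      simp [Matrix.submatrix, Matrix.one_apply, hρ.injective.eq_iff]
    rw [this, Matrix.det_one]
    exact zero_le_one
  · rw [Matrix.det_apply]
    apply Finset.sum_nonneg
    intro σ _
    rcases eq_or_ne (∏ i, ((1 : Matrix (Fin N) (Fin N) ℝ)).submatrix ρ κ (σ i) i) 0 with h0 | h0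
    · rw [h0, smul_zero]
    · exfalso
      have hterm : ∀ i, ρ (σ i) = κ i := by
        intro i
        have := Finset.prod_ne_zero_iff.1 h0 i (Finset.mem_univ i)
        simp only [Matrix.submatrix_apply, Matrix.one_apply] at this
        by_contra hne
        simp [hne] at this
      have hσ : StrictMono ⇑σ := by
        intro i i' hii
        by_contra hle
        push_neg at hle
        rcases lt_or_eq_of_le hle with hlt | heq
        · have h1 : κ i < κ i' := hκ hii
          have h2 : ρ (σ i') < ρ (σ i) := hρ hlt
          rw [hterm i, hterm i'] at h2
          exact absurd h1 (not_lt.2 h2.le)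
        · exact absurd (σ.injective heq) (by omega)
      have hid : ∀ i, σ i = i := strictMono_perm_eq_id σ hσ
      apply h
      funext i
      rw [← hterm i, hid i]

/-- Multiplying on the left by a nonnegative "non-crossing lower" matrix preserves
nonnegativity of all `r × r` minors. -/
lemma tp_mul_step {N r : ℕ} (S Q : Matrix (Fin N) (Fin N) ℝ)
    (hS0 : ∀ p q, 0 ≤ S p q)
    (hnc : ∀ p1 q1 p2 q2, S p1 q1 ≠ 0 → S p2 q2 ≠ 0 →
      (q2 : ℕ) < (q1 : ℕ) → (p1 : ℕ) < (p2 : ℕ) → False)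
    (hQ : ∀ ρ κ : Fin r → Fin N, StrictMono ρ → StrictMono κ →
      0 ≤ ((Q.submatrix ρ κ).det))
    (ρ κ : Fin r → Fin N) (hρ : StrictMono ρ) (hκ : StrictMono κ) :
    0 ≤ (((S * Q).submatrix ρ κ).det) := by
  have hrow : (S * Q).submatrix ρ κ =
      Matrix.of (fun i => ∑ h : Fin N, S (ρ i) h • (fun j => Q h (κ j))) := by
    funext i j
    simp [Matrix.mul_apply, Finset.sum_apply, smul_eq_mul]
  have key := (Matrix.detRowAlternating :
      (Fin r → ℝ) [⋀^Fin r]→ₗ[ℝ] ℝ).toMultilinearMap.map_sum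
      (g := fun (i : Fin r) (h : Fin N) => S (ρ i) h • (fun j => Q h (κ j)))
  have hdet : ((S * Q).submatrix ρ κ).det
      = ∑ f : Fin r → Fin N, (∏ i, S (ρ i) (f i)) • (Q.submatrix f κ).det := by
    rw [hrow]
    refine Eq.trans (key) ?_
    congr 1
    funext f
    exact (Matrix.detRowAlternating :
      (Fin r → ℝ) [⋀^Fin r]→ₗ[ℝ] ℝ).toMultilinearMap.map_smul_univ
      (fun i => S (ρ i) (f i)) (fun i => fun j => Q (f i) (κ j))
  rw [hdet]
  apply Finset.sum_nonneg
  intro f _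
  by_cases hmono : StrictMono f
  · exact smul_nonneg (Finset.prod_nonneg fun i _ => hS0 _ _) (hQ f κ hmono hκ)
  by_cases hinj : Function.Injective f
  · have : ∃ i i', i < i' ∧ f i' < f i := by
      simp only [StrictMono, not_forall] at hmono
      obtain ⟨i, i', hii, hnlt⟩ := hmono
      refine ⟨i, i', hii, ?_⟩
      rcases lt_or_eq_of_le (not_lt.1 hnlt) with h | h
      · exact h
      · exact absurd (hinj h) (by omega)
    obtain ⟨i, i', hii, hf⟩ := this
    have : ∏ i, S (ρ i) (f i) = 0 := by
      by_contra h0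
      have h1 := Finset.prod_ne_zero_iff.1 h0 i (Finset.mem_univ i)
      have h2 := Finset.prod_ne_zero_iff.1 h0 i' (Finset.mem_univ i')
      exact hnc (ρ i) (f i) (ρ i') (f i') h1 h2 (by exact_mod_cast hf) (by exact_mod_cast hρ hii)
    rw [this, zero_smul]
  · simp only [Function.Injective, not_forall] at hinj
    obtain ⟨i, i', hfeq, hne⟩ := hinj
    have : (Q.submatrix f κ).det = 0 := by
      apply Matrix.det_zero_of_row_eq hne
      funext j
      simp [Matrix.submatrix, hfeq]
    rw [this, smul_zero]


/-- Key cancellation. -/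
lemma cancel {δ σ : ℕ} (hδσ : δ < σ) {x y : ℕ} (h : σ*x + δ*y ≤ σ*y + δ*x) : x ≤ y := by
  by_contra hxy
  push_neg at hxy
  have h1 : σ*y + σ*(x-y) = σ*x := by rw [← Nat.mul_add]; congr 1; omega
  have h2 : δ*y + δ*(x-y) = δ*x := by rw [← Nat.mul_add]; congr 1; omega
  have h3 : δ*(x-y) < σ*(x-y) := Nat.mul_lt_mul_of_lt_of_le hδσ le_rfl (by omega)
  omega

lemma gap {δ σ : ℕ} (hδσ : δ < σ) {x y : ℕ} (h : x < y) :
    σ*x + δ*y + 1 ≤ σ*y + δ*x := by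
  have h1 : σ*x + σ*(y-x) = σ*y := by rw [← Nat.mul_add]; congr 1; omega
  have h2 : δ*x + δ*(y-x) = δ*y := by rw [← Nat.mul_add]; congr 1; omega
  have h3 : δ*(y-x) + (y-x) ≤ σ*(y-x) := by
    have h4 := Nat.mul_le_mul_right (y-x) (show δ+1 ≤ σ by omega)
    have h5 : (δ+1)*(y-x) = δ*(y-x) + (y-x) := by rw [Nat.succ_mul]
    omega
  omega

/-- All data and hypotheses of the ray construction. -/
structure Ctx (r : ℕ) : Type where
  a : ℝ
  b : ℝ
  c : ℝ
  n : ℕ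
  k : ℕ
  δ : ℕ
  σ : ℕ
  ρ : Fin r → ℕ
  κ : Fin r → ℕ
  ha : 0 ≤ a
  hb : 0 ≤ b
  hc : 0 ≤ c
  hkn : k ≤ n
  hδ1 : 1 ≤ δ
  hkσ : k < σ
  hδσ : δ < σ
  hρ : StrictMono ρ
  hκ : StrictMono κ
  hr : 0 < r

namespace Ctx

variable {r : ℕ} (C : Ctx r)

/-- Capture column of sink `i`. -/
def cap (i : Fin r) : ℕ := C.n + C.δ * C.ρ i
/-- Height of sink `i`. -/
def BH (i : Fin r) : ℕ := 4*(C.k + C.σ * C.ρ i) + 4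
/-- Height of the post-capture lane of sink `i` at column `t ≥ cap i + 1`. -/
def LH (i : Fin r) (t : ℕ) : ℕ := 4*(C.k + C.σ * C.ρ i + (t - C.cap i)) + 1
/-- Height of the pre-lane of source `j` at column `t ≤ δ·κ j`. -/
def PH (j : Fin r) (t : ℕ) : ℕ := 4*(C.σ * C.κ j - C.δ * C.κ j + t) + 4

def isPre (t h : ℕ) : Prop := ∃ j, t < C.δ * C.κ j ∧ h = C.PH j t
def isLane (t h : ℕ) : Prop := ∃ i, C.cap i < t ∧ h = C.LH i t
def isCap (t h : ℕ) : Prop := ∃ i, t = C.cap i ∧ h = C.BH i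
def flOK (t h : ℕ) : Prop := ∃ i, t ≤ C.cap i ∧ C.BH i ≤ h + 4*(C.cap i - t)

open Classical in
/-- Weight of the edge from height `h` at column `t` to height `h'` at column `t+1`. -/
noncomputable def w (t h h' : ℕ) : ℝ :=
  if C.isPre t h then (if h' = h + 4 then 1 else 0)
  else if C.isLane t h then (if h' = h + 4 then 1 else 0)
  else if C.isCap t h then (if h' = h + 1 then 1 else 0)
  else if h % 4 = 0 ∧ 4 ≤ h ∧ C.flOK t h then
    (if h' = h then C.b else if h' = h + 2 then C.c else if h' = h + 4 then C.a else 0)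
  else if h % 4 = 2 ∧ 6 ≤ h ∧ C.flOK t (h + 2) then (if h' = h + 2 then 1 else 0)
  else 0

lemma w_nonneg (t h h' : ℕ) : 0 ≤ C.w t h h' := by
  unfold w
  split_ifs <;> first | exact le_refl 0 | exact zero_le_one | exact C.ha | exact C.hb | exact C.hc

lemma isPre_mod (t h : ℕ) (h1 : C.isPre t h) : h % 4 = 0 := by
  obtain ⟨j, _, rfl⟩ := h1; unfold PH; omega
lemma isLane_mod (t h : ℕ) (h1 : C.isLane t h) : h % 4 = 1 := by
  obtain ⟨i, _, rfl⟩ := h1; unfold LH; omega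
lemma isCap_mod (t h : ℕ) (h1 : C.isCap t h) : h % 4 = 0 := by
  obtain ⟨i, _, rfl⟩ := h1; unfold BH; omega

lemma cap_lt_iff {i i' : Fin r} : C.cap i < C.cap i' ↔ i < i' := by
  unfold cap
  constructor
  · intro h
    by_contra hle
    push_neg at hle
    have := C.hρ.monotone hle
    have := Nat.mul_le_mul_left C.δ this
    omega
  · intro h
    have h1 := C.hρ h
    have h2 := Nat.mul_le_mul_left C.δ (show C.ρ i + 1 ≤ C.ρ i' by omega)
    have h3 : C.δ * (C.ρ i + 1) = C.δ * C.ρ i + C.δ := by ring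
    have := C.hδ1
    omega

/-- Floor fact: anything satisfying `flOK t` is at least `4` above an active lane. -/
lemma flOK_lane (t h : ℕ) (hf : C.flOK t h) {i : Fin r} (hi : C.cap i < t) :
    C.LH i t + 7 ≤ h := by
  obtain ⟨i', hti', hBi'⟩ := hf
  have hcc : C.cap i < C.cap i' := lt_of_lt_of_le hi hti'
  have hii : i < i' := (C.cap_lt_iff).1 hcc
  have hgap := gap C.hδσ (C.hρ hii)
  simp only [LH, BH, cap] at *
  omega

/-- A sink height right after its capture column is strictly below the floor. -/
lemma flOK_cap (t h : ℕ) (hf : C.flOK (t+1) h) {i : Fin r} (hi : t = C.cap i) :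
    C.BH i + 8 ≤ h := by
  obtain ⟨i', hti', hBi'⟩ := hf
  have hcc : C.cap i < C.cap i' := by omega
  have hii : i < i' := (C.cap_lt_iff).1 hcc
  have hgap := gap C.hδσ (C.hρ hii)
  simp only [BH, cap] at *
  omega

/-- Pre-lanes and sinks are disjoint (uses `k ≤ n`). -/
lemma pre_cap_disjoint (t h : ℕ) (h1 : C.isPre t h) (h2 : C.isCap t h) : False := by
  obtain ⟨j, hj, hhj⟩ := h1
  obtain ⟨i, hi, hhi⟩ := h2
  have hδκσκ : C.δ * C.κ j ≤ C.σ * C.κ j := Nat.mul_le_mul_right _ (le_of_lt C.hδσ)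
  have heq : C.σ * C.κ j - C.δ * C.κ j + t = C.k + C.σ * C.ρ i := by
    rw [hhj] at hhi; unfold PH BH at hhi; omega
  have hle : C.σ * C.κ j + C.δ * C.ρ i ≤ C.σ * C.ρ i + C.δ * C.κ j := by
    have := C.hkn; unfold cap at hi; omega
  have hκρ : C.κ j ≤ C.ρ i := cancel C.hδσ hle
  have : C.δ * C.κ j ≤ C.δ * C.ρ i := Nat.mul_le_mul_left _ hκρ
  unfold cap at hi
  omega

/-- Shape of nonzero weights. -/
lemma w_shape {t h h' : ℕ} (hw : C.w t h h' ≠ 0) :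
    (h % 4 = 0 ∧ h' = h + 4) ∨
    (h % 4 = 1 ∧ (∃ i, C.cap i < t ∧ h = C.LH i t) ∧ h' = h + 4) ∨
    (h % 4 = 0 ∧ h' = h + 1) ∨
    (h % 4 = 0 ∧ C.flOK t h ∧ (h' = h ∨ h' = h + 2)) ∨
    (h % 4 = 2 ∧ C.flOK t (h + 2) ∧ h' = h + 2) := by
  unfold w at hw
  by_cases hP : C.isPre t h
  · rw [if_pos hP] at hw
    refine Or.inl ⟨C.isPre_mod t h hP, ?_⟩
    by_contra hne; rw [if_neg hne] at hw; exact hw rfl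
  rw [if_neg hP] at hw
  by_cases hL : C.isLane t h
  · rw [if_pos hL] at hw
    have he : h' = h + 4 := by by_contra hne; rw [if_neg hne] at hw; exact hw rfl
    exact Or.inr (Or.inl ⟨C.isLane_mod t h hL, hL, he⟩)
  rw [if_neg hL] at hw
  by_cases hC : C.isCap t h
  · rw [if_pos hC] at hw
    have he : h' = h + 1 := by by_contra hne; rw [if_neg hne] at hw; exact hw rfl
    exact Or.inr (Or.inr (Or.inl ⟨C.isCap_mod t h hC, he⟩))
  rw [if_neg hC] at hw
  by_cases hR : h % 4 = 0 ∧ 4 ≤ h ∧ C.flOK t h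
  · rw [if_pos hR] at hw
    obtain ⟨hm, -, hf⟩ := hR
    by_cases he4 : h' = h + 4
    · exact Or.inl ⟨hm, he4⟩
    · refine Or.inr (Or.inr (Or.inr (Or.inl ⟨hm, hf, ?_⟩)))
      by_contra hne
      push_neg at hne
      rw [if_neg hne.1, if_neg hne.2, if_neg he4] at hw
      exact hw rfl
  rw [if_neg hR] at hw
  by_cases hM : h % 4 = 2 ∧ 6 ≤ h ∧ C.flOK t (h + 2)
  · rw [if_pos hM] at hw
    obtain ⟨hm, -, hf⟩ := hM
    have he : h' = h + 2 := by by_contra hne; rw [if_neg hne] at hw; exact hw rfl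
    exact Or.inr (Or.inr (Or.inr (Or.inr ⟨hm, hf, he⟩)))
  rw [if_neg hM] at hw
  exact absurd rfl hw

/-- The non-crossing property of each slice. -/
lemma noncross {t κ1 ρ1 κ2 ρ2 : ℕ} (h1 : C.w t κ1 ρ1 ≠ 0) (h2 : C.w t κ2 ρ2 ≠ 0)
    (hk : κ2 < κ1) (hr2 : ρ1 < ρ2) (hlow : κ1 ≤ ρ1) : False := by
  rcases C.w_shape h1 with ⟨m1, e1⟩ | ⟨m1, ⟨i1, hi1, hL1⟩, e1⟩ | ⟨m1, e1⟩ | ⟨m1, f1, e1⟩ | ⟨m1, f1, e1⟩ <;>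
    rcases C.w_shape h2 with ⟨m2, e2⟩ | ⟨m2, ⟨i2, hi2, hL2⟩, e2⟩ | ⟨m2, e2⟩ | ⟨m2, f2, e2⟩ | ⟨m2, f2, e2⟩ <;>
    first
      | omega
      | (have hx := C.flOK_lane t _ f1 hi2; omega)


/-! ### The state evolution -/

def lastI : Fin r := ⟨r-1, by have := C.hr; omega⟩
/-- Final column. -/
def X : ℕ := C.cap C.lastI + 1
/-- Height cut-off. -/
def NN : ℕ := 4*(C.k + C.σ * C.ρ C.lastI + C.σ * C.κ C.lastI + C.X) + 16

lemma le_lastρ (i : Fin r) : C.ρ i ≤ C.ρ C.lastI := by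
  apply C.hρ.monotone
  have := i.isLt; have := C.hr
  exact Fin.mk_le_mk.2 (by omega) |>.trans (le_refl _)

lemma le_lastκ (j : Fin r) : C.κ j ≤ C.κ C.lastI := by
  apply C.hκ.monotone
  have := j.isLt; have := C.hr
  exact Fin.mk_le_mk.2 (by omega) |>.trans (le_refl _)

lemma cap_lt_X (i : Fin r) : C.cap i < C.X := by
  have h1 : C.cap i ≤ C.cap C.lastI := by
    rcases lt_or_eq_of_le (le_lastρ C i) with h | h
    · unfold cap
      have := Nat.mul_le_mul_left C.δ (le_of_lt h)
      omega
    · unfold cap; rw [h]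
  unfold X; omega

lemma PH_succ (j : Fin r) (t : ℕ) : C.PH j (t+1) = C.PH j t + 4 := by
  unfold PH; omega

lemma PH_lt_N (j : Fin r) {t : ℕ} (ht : t ≤ C.X) : C.PH j t + 5 < C.NN := by
  have h1 : C.σ * C.κ j ≤ C.σ * C.κ C.lastI := Nat.mul_le_mul_left _ (C.le_lastκ j)
  unfold PH NN
  omega

lemma LH_lt_N (i : Fin r) {t : ℕ} (ht : t ≤ C.X) : C.LH i t + 5 < C.NN := by
  have h1 : C.σ * C.ρ i ≤ C.σ * C.ρ C.lastI := Nat.mul_le_mul_left _ (C.le_lastρ i)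
  unfold LH NN
  have : t - C.cap i ≤ C.X := by omega
  omega

/-- The evolving vector started from the pre-lane entry of source `j`. -/
noncomputable def u (j : Fin r) (t : ℕ) : ℕ → ℝ :=
  Nat.rec (fun h => if h = C.PH j 0 then 1 else 0)
    (fun t ut h' => ∑ h ∈ Finset.range C.NN, C.w t h h' * ut h) t

lemma u_succ_def (j : Fin r) (t h' : ℕ) :
    C.u j (t+1) h' = ∑ h ∈ Finset.range C.NN, C.w t h h' * C.u j t h := rfl

/-- Ray values, shifted. -/
noncomputable def dd (j : Fin r) (m K : ℕ) : ℝ :=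
  if C.σ * C.κ j ≤ K then genDelannoy C.a C.b C.c m (K - C.σ * C.κ j) else 0

/-- Value captured by the lane of sink `i` from source `j`. -/
noncomputable def capval (i j : Fin r) : ℝ :=
  if C.δ * C.κ j ≤ C.cap i ∧ C.σ * C.κ j ≤ C.k + C.σ * C.ρ i then
    genDelannoy C.a C.b C.c (C.cap i - C.δ * C.κ j) (C.k + C.σ * C.ρ i - C.σ * C.κ j)
  else 0

/-- The master invariant. -/
def Inv (j : Fin r) (t : ℕ) : Prop :=
  (t ≤ C.δ * C.κ j → ∀ h, C.u j t h = (if h = C.PH j t then 1 else 0)) ∧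
  (C.δ * C.κ j ≤ t → ∀ K, C.flOK t (4*K+4) →
    C.u j t (4*K+4) = C.dd j (t - C.δ * C.κ j) K) ∧
  (C.δ * C.κ j + 1 ≤ t → ∀ K, C.flOK t (4*K+4) →
    C.u j t (4*K+6) = C.c * C.dd j (t - C.δ * C.κ j - 1) K) ∧
  (∀ i, C.cap i < t → C.u j t (C.LH i t) = C.capval i j) ∧
  (∀ h, C.PH j t + 1 ≤ h → C.u j t h = 0)

/-! ### Weight computation lemmas -/

lemma isLane_not_isPre {t h : ℕ} (hL : C.isLane t h) : ¬ C.isPre t h := fun hP => by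
  have := C.isLane_mod t h hL; have := C.isPre_mod t h hP; omega

lemma isCap_not_isLane {t h : ℕ} (hC : C.isCap t h) : ¬ C.isLane t h := fun hL => by
  have := C.isLane_mod t h hL; have := C.isCap_mod t h hC; omega

lemma w_of_pre {t h : ℕ} (hP : C.isPre t h) (h' : ℕ) :
    C.w t h h' = if h' = h + 4 then 1 else 0 := by
  unfold w; rw [if_pos hP]

lemma w_of_lane {t h : ℕ} (hL : C.isLane t h) (h' : ℕ) :
    C.w t h h' = if h' = h + 4 then 1 else 0 := by
  unfold w; rw [if_neg (C.isLane_not_isPre hL), if_pos hL]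

lemma w_of_cap {t h : ℕ} (hC : C.isCap t h) (h' : ℕ) :
    C.w t h h' = if h' = h + 1 then 1 else 0 := by
  unfold w
  rw [if_neg (fun hP => C.pre_cap_disjoint t h hP hC), if_neg (C.isCap_not_isLane hC),
    if_pos hC]

lemma w_of_real {t h : ℕ} (hm : h % 4 = 0) (h4 : 4 ≤ h) (hf : C.flOK t h)
    (hP : ¬ C.isPre t h) (hC : ¬ C.isCap t h) (h' : ℕ) :
    C.w t h h' = if h' = h then C.b else if h' = h + 2 then C.c
      else if h' = h + 4 then C.a else 0 := by
  have hL : ¬ C.isLane t h := fun hL => by have := C.isLane_mod t h hL; omega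
  unfold w
  rw [if_neg hP, if_neg hL, if_neg hC, if_pos ⟨hm, h4, hf⟩]

lemma w_of_mid {t h : ℕ} (hm : h % 4 = 2) (h6 : 6 ≤ h) (hf : C.flOK t (h+2)) (h' : ℕ) :
    C.w t h h' = if h' = h + 2 then 1 else 0 := by
  have hP : ¬ C.isPre t h := fun hx => by have := C.isPre_mod t h hx; omega
  have hL : ¬ C.isLane t h := fun hx => by have := C.isLane_mod t h hx; omega
  have hC : ¬ C.isCap t h := fun hx => by have := C.isCap_mod t h hx; omega
  unfold w
  rw [if_neg hP, if_neg hL, if_neg hC, if_neg (by omega : ¬(h % 4 = 0 ∧ 4 ≤ h ∧ C.flOK t h)),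
    if_pos ⟨hm, h6, hf⟩]

lemma w_zero_mod3 {t h : ℕ} (hm : h % 4 = 3) (h' : ℕ) : C.w t h h' = 0 := by
  have hP : ¬ C.isPre t h := fun hx => by have := C.isPre_mod t h hx; omega
  have hL : ¬ C.isLane t h := fun hx => by have := C.isLane_mod t h hx; omega
  have hC : ¬ C.isCap t h := fun hx => by have := C.isCap_mod t h hx; omega
  unfold w
  rw [if_neg hP, if_neg hL, if_neg hC, if_neg (by omega : ¬(h % 4 = 0 ∧ 4 ≤ h ∧ C.flOK t h)),
    if_neg (by omega : ¬(h % 4 = 2 ∧ 6 ≤ h ∧ C.flOK t (h+2)))]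

lemma w_zero_mod1 {t h : ℕ} (hm : h % 4 = 1) (hL : ¬ C.isLane t h) (h' : ℕ) :
    C.w t h h' = 0 := by
  have hP : ¬ C.isPre t h := fun hx => by have := C.isPre_mod t h hx; omega
  have hC : ¬ C.isCap t h := fun hx => by have := C.isCap_mod t h hx; omega
  unfold w
  rw [if_neg hP, if_neg hL, if_neg hC, if_neg (by omega : ¬(h % 4 = 0 ∧ 4 ≤ h ∧ C.flOK t h)),
    if_neg (by omega : ¬(h % 4 = 2 ∧ 6 ≤ h ∧ C.flOK t (h+2)))]

lemma w_lt4 {t h : ℕ} (hh : h < 4) (h' : ℕ) : C.w t h h' = 0 := by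
  have hP : ¬ C.isPre t h := by rintro ⟨j, -, rfl⟩; unfold PH at hh; omega
  have hL : ¬ C.isLane t h := by rintro ⟨i, hi, rfl⟩; unfold LH at hh; omega
  have hC : ¬ C.isCap t h := by rintro ⟨i, -, rfl⟩; unfold BH at hh; omega
  unfold w
  rw [if_neg hP, if_neg hL, if_neg hC, if_neg (by omega : ¬(h % 4 = 0 ∧ 4 ≤ h ∧ C.flOK t h)),
    if_neg (by omega : ¬(h % 4 = 2 ∧ 6 ≤ h ∧ C.flOK t (h+2)))]

/-- shape gives support in `{H, H-1, H-2, H-4}`. -/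
lemma w_support {t h H : ℕ} (hw : C.w t h H ≠ 0) :
    h ≤ H ∧ H ≤ h + 4 ∧ H ≠ h + 3 := by
  rcases C.w_shape hw with ⟨-, e⟩ | ⟨-, -, e⟩ | ⟨-, e⟩ | ⟨-, -, e⟩ | ⟨-, -, e⟩ <;> omega

/-- Four-term expansion of one evolution step. -/
lemma u_succ4 (j : Fin r) (t H : ℕ) (h4 : 4 ≤ H) (hN : H < C.NN) :
    C.u j (t+1) H = C.w t H H * C.u j t H + C.w t (H-1) H * C.u j t (H-1)
      + C.w t (H-2) H * C.u j t (H-2) + C.w t (H-4) H * C.u j t (H-4) := by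
  rw [u_succ_def]
  have hsub : ({H, H-1, H-2, H-4} : Finset ℕ) ⊆ Finset.range C.NN := by
    intro x hx
    simp only [Finset.mem_insert, Finset.mem_singleton] at hx
    rw [Finset.mem_range]
    omega
  rw [← Finset.sum_subset hsub]
  · rw [Finset.sum_insert (by simp; omega), Finset.sum_insert (by simp; omega),
      Finset.sum_insert (by simp; omega), Finset.sum_singleton]
    ring
  · intro x _ hx
    simp only [Finset.mem_insert, Finset.mem_singleton] at hx
    push_neg at hx
    rcases eq_or_ne (C.w t x H) 0 with h0 | h0
    · rw [h0, zero_mul]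
    · exfalso
      have := C.w_support h0
      omega


/-! ### flOK helper lemmas -/

lemma flOK_pred {t h : ℕ} (hf : C.flOK (t+1) h) : C.flOK t h := by
  obtain ⟨i, hti, hBi⟩ := hf
  exact ⟨i, by omega, by omega⟩

lemma flOK_down {t h : ℕ} (h8 : 8 ≤ h) (hf : C.flOK (t+1) h) : C.flOK t (h - 4) := by
  obtain ⟨i, hti, hBi⟩ := hf
  exact ⟨i, by omega, by omega⟩

/-- Above-cone vanishing at pre-lane heights. -/
lemma dd_pre_zero (j : Fin r) {t K : ℕ} (hd : C.δ * C.κ j ≤ t)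
    (hP : C.isPre t (4*K+4)) : C.dd j (t - C.δ * C.κ j) K = 0 := by
  obtain ⟨j2, hj2, hK⟩ := hP
  have hKeq : K = C.σ * C.κ j2 - C.δ * C.κ j2 + t := by unfold PH at hK; omega
  have hδle : C.δ * C.κ j2 ≤ C.σ * C.κ j2 := Nat.mul_le_mul_right _ (le_of_lt C.hδσ)
  have hδle1 : C.δ * C.κ j ≤ C.σ * C.κ j := Nat.mul_le_mul_right _ (le_of_lt C.hδσ)
  have hκlt : C.κ j < C.κ j2 := by
    by_contra hle
    push_neg at hle
    have := Nat.mul_le_mul_left C.δ hle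
    omega
  have hgap := gap C.hδσ hκlt
  unfold dd
  split_ifs with hB
  · exact gd_zero _ _ _ _ _ (by omega)
  · rfl

/-- The fundamental recurrence of `dd`. -/
lemma dd_rec (j : Fin r) (m K : ℕ) :
    C.dd j (m+1) K = C.b * C.dd j m K
      + (if 1 ≤ K ∧ 1 ≤ m then C.c * C.dd j (m-1) (K-1) else 0)
      + (if 1 ≤ K then C.a * C.dd j m (K-1) else 0) := by
  rcases lt_trichotomy K (C.σ * C.κ j) with hKB | hKB | hKB
  · have z1 : ∀ m', C.dd j m' K = 0 := fun m' => by unfold dd; rw [if_neg (by omega)]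
    have z2 : ∀ m', C.dd j m' (K-1) = 0 := fun m' => by unfold dd; rw [if_neg (by omega)]
    rw [z1, z1, z2, z2]
    split_ifs <;> ring
  · have e1 : ∀ m', C.dd j m' K = genDelannoy C.a C.b C.c m' 0 := fun m' => by
      unfold dd; rw [if_pos (by omega), show K - C.σ*C.κ j = 0 by omega]
    rcases Nat.eq_zero_or_pos K with hK0 | hK1
    · rw [if_neg (by omega), if_neg (by omega), e1, e1, gd_succ0]
      ring
    · have z2 : ∀ m', C.dd j m' (K-1) = 0 := fun m' => by
        unfold dd; rw [if_neg (by omega)]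
      rw [e1, e1, z2, z2, gd_succ0]
      split_ifs <;> ring
  · have hK1 : 1 ≤ K := by omega
    obtain ⟨p, hp⟩ : ∃ p, K - C.σ*C.κ j = p + 1 := ⟨K - C.σ*C.κ j - 1, by omega⟩
    have e0 : ∀ m', C.dd j m' K = genDelannoy C.a C.b C.c m' (p+1) := fun m' => by
      unfold dd; rw [if_pos (by omega), hp]
    have e1 : ∀ m', C.dd j m' (K-1) = genDelannoy C.a C.b C.c m' p := fun m' => by
      unfold dd; rw [if_pos (by omega), show K - 1 - C.σ*C.κ j = p by omega]
    rcases Nat.eq_zero_or_pos m with hm0 | hm1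
    · subst hm0
      rw [if_neg (by omega), if_pos hK1, e0, e0, e1, gd_1succ]
      ring
    · obtain ⟨q, hq⟩ : ∃ q, m = q + 1 := ⟨m-1, by omega⟩
      subst hq
      rw [if_pos ⟨hK1, by omega⟩, if_pos hK1, show q + 1 - 1 = q by omega,
        e0, e0, e1, e1, show q+1+1 = q+2 by omega, gd_rec]
      ring

/-! ### Step lemmas for the invariant -/

lemma supp_step (j : Fin r) (t : ℕ)
    (hS : ∀ h, C.PH j t + 1 ≤ h → C.u j t h = 0) :
    ∀ h, C.PH j (t+1) + 1 ≤ h → C.u j (t+1) h = 0 := by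
  intro h hh
  rw [u_succ_def]
  apply Finset.sum_eq_zero
  intro x _
  rcases eq_or_ne (C.w t x h) 0 with h0 | h0
  · rw [h0, zero_mul]
  · have hsup := C.w_support h0
    rw [C.PH_succ] at hh
    rw [hS x (by omega), mul_zero]

lemma p1_step (j : Fin r) (t : ℕ) (ht : t + 1 ≤ C.δ * C.κ j) (htX : t + 1 ≤ C.X)
    (hP1 : ∀ h, C.u j t h = (if h = C.PH j t then 1 else 0)) :
    ∀ h, C.u j (t+1) h = (if h = C.PH j (t+1) then 1 else 0) := by
  intro h'
  rw [u_succ_def]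
  rw [Finset.sum_eq_single (C.PH j t)]
  · rw [hP1, if_pos rfl, mul_one, C.w_of_pre ⟨j, by omega, rfl⟩, C.PH_succ]
  · intro x _ hne
    rw [hP1 x, if_neg hne, mul_zero]
  · intro hmem
    exfalso
    apply hmem
    rw [Finset.mem_range]
    have := C.PH_lt_N j (show t ≤ C.X by omega)
    omega

/-- Value of `u` at the phase boundary matches `dd`. -/
lemma E_boundary (j : Fin r) (t : ℕ) (ht : t = C.δ * C.κ j)
    (hP1 : ∀ h, C.u j t h = (if h = C.PH j t then 1 else 0)) :
    ∀ K, C.u j t (4*K+4) = C.dd j (t - C.δ * C.κ j) K := by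
  intro K
  have hm0 : t - C.δ * C.κ j = 0 := by omega
  have hδle : C.δ * C.κ j ≤ C.σ * C.κ j := Nat.mul_le_mul_right _ (le_of_lt C.hδσ)
  have hPH : C.PH j t = 4*(C.σ * C.κ j)+4 := by unfold PH; omega
  rw [hP1, hm0]
  unfold dd
  by_cases hK : K = C.σ * C.κ j
  · rw [if_pos (show (4*K+4 : ℕ) = C.PH j t by omega), if_pos (by omega),
      show K - C.σ*C.κ j = 0 by omega, gd00]
  · rw [if_neg (show (4*K+4 : ℕ) ≠ C.PH j t by omega)]
    split_ifs with hB
    · rw [show K - C.σ*C.κ j = (K - C.σ*C.κ j - 1) + 1 by omega, gd0succ]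
    · rfl


/-- Main evolution step for the bulk clause (E). -/
lemma E_step (j : Fin r) (t : ℕ) (htX : t + 1 ≤ C.X) (hd : C.δ * C.κ j ≤ t)
    (hE : ∀ K, C.flOK t (4*K+4) → C.u j t (4*K+4) = C.dd j (t - C.δ * C.κ j) K)
    (hM : C.δ * C.κ j + 1 ≤ t → ∀ K, C.flOK t (4*K+4) →
      C.u j t (4*K+6) = C.c * C.dd j (t - C.δ * C.κ j - 1) K)
    (hP1 : t ≤ C.δ * C.κ j → ∀ h, C.u j t h = (if h = C.PH j t then 1 else 0))
    (hS1 : ∀ h, C.PH j (t+1) + 1 ≤ h → C.u j (t+1) h = 0) :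
    ∀ K, C.flOK (t+1) (4*K+4) →
      C.u j (t+1) (4*K+4) = C.dd j (t + 1 - C.δ * C.κ j) K := by
  intro K hfl
  have hδle : C.δ * C.κ j ≤ C.σ * C.κ j := Nat.mul_le_mul_right _ (le_of_lt C.hδσ)
  by_cases hbig : C.PH j (t+1) + 1 ≤ 4*K+4
  · rw [hS1 _ hbig]
    have hKbig : C.σ * C.κ j - C.δ * C.κ j + (t+1) < K := by
      unfold PH at hbig; omega
    unfold dd
    rw [if_pos (by omega), gd_zero _ _ _ _ _ (by omega)]
  push_neg at hbig
  have hN : 4*K+4 < C.NN := by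
    have := C.PH_lt_N j (show t+1 ≤ C.X from htX)
    omega
  rw [C.u_succ4 j t (4*K+4) (by omega) hN]
  have hfl0 : C.flOK t (4*K+4) := C.flOK_pred hfl
  have ht2 : C.w t (4*K+4-1) (4*K+4) = 0 := C.w_zero_mod3 (by omega) _
  have ht1 : C.w t (4*K+4) (4*K+4) * C.u j t (4*K+4)
      = C.b * C.dd j (t - C.δ * C.κ j) K := by
    by_cases hPH : C.isPre t (4*K+4)
    · rw [C.w_of_pre hPH, if_neg (by omega), zero_mul,
        C.dd_pre_zero j hd hPH, mul_zero]
    · have hCH : ¬ C.isCap t (4*K+4) := by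
        rintro ⟨i, hti, hHB⟩
        have := C.flOK_cap t (4*K+4) hfl hti
        omega
      rw [C.w_of_real (by omega) (by omega) hfl0 hPH hCH, if_pos rfl, hE K hfl0]
  have ht3 : C.w t (4*K+4-2) (4*K+4) * C.u j t (4*K+4-2)
      = (if 1 ≤ K ∧ 1 ≤ t - C.δ * C.κ j then
          C.c * C.dd j (t - C.δ * C.κ j - 1) (K-1) else 0) := by
    rcases Nat.eq_zero_or_pos K with hK0 | hK1
    · subst hK0
      rw [show 4*0+4-2 = 2 by omega, C.w_lt4 (by omega), zero_mul, if_neg (by omega)]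
    · have hf2 : C.flOK t (4*K+4-2+2) := by
        rw [show 4*K+4-2+2 = 4*K+4 by omega]; exact hfl0
      rw [C.w_of_mid (by omega) (by omega) hf2, if_pos (by omega), one_mul]
      by_cases hdt : C.δ * C.κ j + 1 ≤ t
      · rw [if_pos ⟨hK1, by omega⟩]
        have hfl4 : C.flOK t (4*(K-1)+4) := by
          have := C.flOK_down (show 8 ≤ 4*K+4 by omega) hfl
          rw [show 4*K+4-4 = 4*(K-1)+4 by omega] at this
          exact this
        have := hM hdt (K-1) hfl4
        rw [show 4*K+4-2 = 4*(K-1)+6 by omega, this]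
      · have hne : (4*K+4-2 : ℕ) ≠ C.PH j t := by
          have : C.PH j t % 4 = 0 := by unfold PH; omega
          omega
        rw [hP1 (by omega) _, if_neg hne, if_neg (by omega)]
  have ht4 : C.w t (4*K+4-4) (4*K+4) * C.u j t (4*K+4-4)
      = (if 1 ≤ K then C.a * C.dd j (t - C.δ * C.κ j) (K-1) else 0) := by
    rcases Nat.eq_zero_or_pos K with hK0 | hK1
    · subst hK0
      rw [show 4*0+4-4 = 0 by omega, C.w_lt4 (by omega), zero_mul, if_neg (by omega)]
    · have hHm4 : 4*K+4-4 = 4*(K-1)+4 := by omega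
      have hfl4 : C.flOK t (4*(K-1)+4) := by
        have := C.flOK_down (show 8 ≤ 4*K+4 by omega) hfl
        rw [show 4*K+4-4 = 4*(K-1)+4 by omega] at this
        exact this
      have hval : C.u j t (4*K+4-4) = C.dd j (t - C.δ * C.κ j) (K-1) := by
        rw [hHm4]; exact hE (K-1) hfl4
      by_cases hPH : C.isPre t (4*K+4-4)
      · rw [C.w_of_pre hPH, if_pos (by omega), one_mul, hval, if_pos (show 1 ≤ K by omega)]
        have h0 : C.dd j (t - C.δ * C.κ j) (K-1) = 0 := by
          apply C.dd_pre_zero j hd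
          rw [← hHm4]; exact hPH
        rw [h0, mul_zero]
      · have hCH : ¬ C.isCap t (4*K+4-4) := by
          rintro ⟨i, hti, hHB⟩
          have := C.flOK_cap t (4*K+4) hfl hti
          omega
        rw [hHm4] at hPH hCH ⊢
        rw [C.w_of_real (by omega) (by omega) hfl4 hPH hCH,
          if_neg (by omega), if_neg (by omega), if_pos (by omega),
          hE (K-1) hfl4, if_pos (show 1 ≤ K by omega)]
  rw [ht1, ht2, ht3, ht4, zero_mul,
    show t + 1 - C.δ * C.κ j = (t - C.δ * C.κ j) + 1 by omega, C.dd_rec]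
  ring


lemma w_mod2_ne {t h h' : ℕ} (hm : h % 4 = 2) (hne : h' ≠ h + 2) : C.w t h h' = 0 := by
  rcases eq_or_ne (C.w t h h') 0 with h0 | h0
  · exact h0
  · exfalso
    rcases C.w_shape h0 with ⟨m1, e1⟩ | ⟨m1, -, e1⟩ | ⟨m1, e1⟩ | ⟨m1, -, e1⟩ | ⟨m1, -, e1⟩ <;>
      omega

lemma w_mod1_ne {t h h' : ℕ} (hm : h % 4 = 1) (hne : h' ≠ h + 4) : C.w t h h' = 0 := by
  rcases eq_or_ne (C.w t h h') 0 with h0 | h0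
  · exact h0
  · exfalso
    rcases C.w_shape h0 with ⟨m1, e1⟩ | ⟨m1, -, e1⟩ | ⟨m1, e1⟩ | ⟨m1, -, e1⟩ | ⟨m1, -, e1⟩ <;>
      omega

lemma w_mod0_ne {t h h' : ℕ} (hm : h % 4 = 0) (hC : ¬ C.isCap t h)
    (hne0 : h' ≠ h) (hne2 : h' ≠ h + 2) (hne4 : h' ≠ h + 4) : C.w t h h' = 0 := by
  have hLn : ¬ C.isLane t h := fun hx => by have := C.isLane_mod t h hx; omega
  by_cases hP : C.isPre t h
  · rw [C.w_of_pre hP, if_neg hne4]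
  by_cases hreal : h % 4 = 0 ∧ 4 ≤ h ∧ C.flOK t h
  · rw [C.w_of_real hreal.1 hreal.2.1 hreal.2.2 hP hC, if_neg hne0, if_neg hne2, if_neg hne4]
  · unfold w
    rw [if_neg hP, if_neg hLn, if_neg hC, if_neg hreal,
      if_neg (by omega : ¬(h % 4 = 2 ∧ 6 ≤ h ∧ C.flOK t (h+2)))]

/-- Main evolution step for the midpoint clause (M). -/
lemma M_step (j : Fin r) (t : ℕ) (htX : t + 1 ≤ C.X) (hd : C.δ * C.κ j ≤ t)
    (hE : ∀ K, C.flOK t (4*K+4) → C.u j t (4*K+4) = C.dd j (t - C.δ * C.κ j) K)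
    (hS1 : ∀ h, C.PH j (t+1) + 1 ≤ h → C.u j (t+1) h = 0) :
    ∀ K, C.flOK (t+1) (4*K+4) →
      C.u j (t+1) (4*K+6) = C.c * C.dd j (t + 1 - C.δ * C.κ j - 1) K := by
  intro K hfl
  have hδle : C.δ * C.κ j ≤ C.σ * C.κ j := Nat.mul_le_mul_right _ (le_of_lt C.hδσ)
  rw [show t + 1 - C.δ * C.κ j - 1 = t - C.δ * C.κ j by omega]
  by_cases hbig : C.PH j (t+1) + 1 ≤ 4*K+6
  · rw [hS1 _ hbig]
    by_cases hbig2 : C.σ * C.κ j - C.δ * C.κ j + t < K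
    · unfold dd
      rw [if_pos (by omega), gd_zero _ _ _ _ _ (by omega), mul_zero]
    · exfalso
      unfold PH at hbig
      omega
  push_neg at hbig
  have hN : 4*K+6 < C.NN := by
    have := C.PH_lt_N j (show t+1 ≤ C.X from htX)
    omega
  rw [C.u_succ4 j t (4*K+6) (by omega) hN]
  have hfl0 : C.flOK t (4*K+4) := C.flOK_pred hfl
  have ht1 : C.w t (4*K+6) (4*K+6) = 0 := C.w_mod2_ne (by omega) (by omega)
  have ht2 : C.w t (4*K+6-1) (4*K+6) = 0 := C.w_mod1_ne (by omega) (by omega)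
  have ht4 : C.w t (4*K+6-4) (4*K+6) = 0 := by
    rcases Nat.eq_zero_or_pos K with hK0 | hK1
    · subst hK0; exact C.w_lt4 (by omega) _
    · exact C.w_mod2_ne (by omega) (by omega)
  have ht3 : C.w t (4*K+6-2) (4*K+6) * C.u j t (4*K+6-2)
      = C.c * C.dd j (t - C.δ * C.κ j) K := by
    rw [show 4*K+6-2 = 4*K+4 by omega]
    by_cases hPH : C.isPre t (4*K+4)
    · rw [C.w_of_pre hPH, if_neg (by omega), zero_mul,
        C.dd_pre_zero j hd hPH, mul_zero]
    · have hCH : ¬ C.isCap t (4*K+4) := by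
        rintro ⟨i, hti, hHB⟩
        have := C.flOK_cap t (4*K+4) hfl hti
        omega
      rw [C.w_of_real (by omega) (by omega) hfl0 hPH hCH,
        if_neg (by omega), if_pos (by omega), hE K hfl0]
  rw [ht1, ht2, ht3, ht4, zero_mul, zero_mul, zero_mul]
  ring

/-- Main evolution step for the lane clause (L). -/
lemma L_step (j : Fin r) (t : ℕ) (htX : t + 1 ≤ C.X)
    (hP1 : t ≤ C.δ * C.κ j → ∀ h, C.u j t h = (if h = C.PH j t then 1 else 0))
    (hE : C.δ * C.κ j ≤ t → ∀ K, C.flOK t (4*K+4) →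
      C.u j t (4*K+4) = C.dd j (t - C.δ * C.κ j) K)
    (hL : ∀ i, C.cap i < t → C.u j t (C.LH i t) = C.capval i j) :
    ∀ i, C.cap i < t + 1 → C.u j (t+1) (C.LH i (t+1)) = C.capval i j := by
  intro i hi
  have h5 : 5 ≤ C.LH i (t+1) := by unfold LH; omega
  have hN : C.LH i (t+1) < C.NN := by
    have := C.LH_lt_N i (show t+1 ≤ C.X from htX)
    omega
  rw [C.u_succ4 j t (C.LH i (t+1)) (by omega) hN]
  have hm1 : C.LH i (t+1) % 4 = 1 := by unfold LH; omega
  have ht1 : C.w t (C.LH i (t+1)) (C.LH i (t+1)) = 0 := C.w_mod1_ne hm1 (by omega)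
  have ht2 : C.w t (C.LH i (t+1) - 2) (C.LH i (t+1)) = 0 := by
    apply C.w_zero_mod3 (by omega)
  rcases eq_or_lt_of_le (show C.cap i ≤ t by omega) with hbase | hstep
  · -- capture at this very column
    have hB : C.LH i (t+1) - 1 = C.BH i := by unfold LH BH; omega
    have ht3 : C.w t (C.LH i (t+1) - 1) (C.LH i (t+1)) * C.u j t (C.LH i (t+1) - 1)
        = C.capval i j := by
      rw [hB, C.w_of_cap ⟨i, hbase.symm, rfl⟩, if_pos (by unfold LH BH; omega), one_mul]
      by_cases hdt : C.δ * C.κ j ≤ t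
      · have hflB : C.flOK t (4*(C.k + C.σ * C.ρ i)+4) :=
          ⟨i, by omega, by unfold BH; omega⟩
        have := hE hdt (C.k + C.σ * C.ρ i) hflB
        rw [show C.BH i = 4*(C.k + C.σ * C.ρ i)+4 from rfl, this]
        unfold dd capval
        rw [← hbase]
        by_cases hσ : C.σ * C.κ j ≤ C.k + C.σ * C.ρ i
        · rw [if_pos hσ, if_pos ⟨by omega, hσ⟩]
        · rw [if_neg hσ, if_neg (by tauto)]
      · push_neg at hdt
        have hne : C.BH i ≠ C.PH j t := by
          intro hcon
          exact C.pre_cap_disjoint t (C.BH i) ⟨j, by omega, hcon⟩ ⟨i, hbase.symm, rfl⟩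
        rw [hP1 (by omega) _, if_neg hne]
        unfold capval
        rw [if_neg (by rw [hbase]; omega)]
    have ht4 : C.w t (C.LH i (t+1) - 4) (C.LH i (t+1)) = 0 := by
      have hL4 : ¬ C.isLane t (C.LH i (t+1) - 4) := by
        rintro ⟨i2, hi2, he2⟩
        have hii : i2 < i := C.cap_lt_iff.1 (by omega)
        have hgap := gap C.hδσ (C.hρ hii)
        simp only [LH, cap] at he2 hi2 hbase
        omega
      exact C.w_zero_mod1 (by omega) hL4 _
    rw [ht1, ht2, ht4, zero_mul, zero_mul, zero_mul, ht3]
    ring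
  · -- pure lane propagation
    have hLm4 : C.LH i (t+1) - 4 = C.LH i t := by unfold LH; omega
    have ht4 : C.w t (C.LH i (t+1) - 4) (C.LH i (t+1)) * C.u j t (C.LH i (t+1) - 4)
        = C.capval i j := by
      rw [hLm4, C.w_of_lane ⟨i, hstep, rfl⟩, if_pos (by unfold LH; omega), one_mul,
        hL i hstep]
    have ht3 : C.w t (C.LH i (t+1) - 1) (C.LH i (t+1)) = 0 := by
      have hC : ¬ C.isCap t (C.LH i (t+1) - 1) := by
        rintro ⟨i2, hi2, he2⟩
        have hii : i < i2 := C.cap_lt_iff.1 (by omega)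
        have hgap := gap C.hδσ (C.hρ hii)
        simp only [LH, BH, cap] at he2 hi2 hstep
        omega
      exact C.w_mod0_ne (by omega) hC (by omega) (by omega) (by omega)
    rw [ht1, ht2, ht3, zero_mul, zero_mul, zero_mul, ht4]
    ring

/-- The master invariant holds at all columns up to `X`. -/
theorem inv_all (j : Fin r) : ∀ t, t ≤ C.X → C.Inv j t := by
  intro t
  induction t with
  | zero =>
    intro _
    refine ⟨fun _ h => rfl, fun hd K _ => C.E_boundary j 0 (by omega) (fun h => rfl) K,
      fun hd => absurd hd (by omega), fun i hi => absurd hi (by omega), fun h hh => ?_⟩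
    show (if h = C.PH j 0 then (1:ℝ) else 0) = 0
    rw [if_neg (by omega)]
  | succ t ih =>
    intro htX
    obtain ⟨hP1, hE, hM, hL, hS⟩ := ih (by omega)
    have hS1 := C.supp_step j t hS
    refine ⟨?_, ?_, ?_, ?_, hS1⟩
    · intro ht h
      exact C.p1_step j t ht htX (hP1 (by omega)) h
    · intro hd K hfl
      rcases eq_or_lt_of_le hd with hb | hlt
      · exact C.E_boundary j (t+1) hb.symm (C.p1_step j t (by omega) htX (hP1 (by omega))) K
      · exact C.E_step j t htX (by omega) (hE (by omega)) hM hP1 hS1 K hfl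
    · intro hd1 K hfl
      exact C.M_step j t htX (by omega) (hE (by omega)) hS1 K hfl
    · exact C.L_step j t htX hP1 hE hL

/-! ### Matrix product formulation -/

noncomputable def S (t : ℕ) : Matrix (Fin C.NN) (Fin C.NN) ℝ :=
  Matrix.of fun h' h => C.w t (h : ℕ) (h' : ℕ)

noncomputable def Q (t : ℕ) : Matrix (Fin C.NN) (Fin C.NN) ℝ :=
  Nat.rec 1 (fun t Qt => C.S t * Qt) t

lemma Q_entry (j : Fin r) (t : ℕ) (h' s0 : Fin C.NN) (hs : (s0 : ℕ) = C.PH j 0) :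
    C.Q t h' s0 = C.u j t (h' : ℕ) := by
  induction t generalizing h' with
  | zero =>
    show (1 : Matrix (Fin C.NN) (Fin C.NN) ℝ) h' s0 = _
    show _ = (if (h' : ℕ) = C.PH j 0 then (1:ℝ) else 0)
    rw [Matrix.one_apply]
    by_cases hee : (h' : ℕ) = C.PH j 0
    · rw [if_pos hee, if_pos (Fin.ext (by omega))]
    · rw [if_neg hee, if_neg (fun hcon => hee (by rw [hcon, hs]))]
  | succ t ih =>
    show (C.S t * C.Q t) h' s0 = _
    rw [Matrix.mul_apply, u_succ_def]
    rw [← Fin.sum_univ_eq_sum_range (fun h => C.w t h (h' : ℕ) * C.u j t h) C.NN]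
    apply Finset.sum_congr rfl
    intro h _
    rw [ih h]
    rfl

lemma Q_tp (t : ℕ) : ∀ ρκ κκ : Fin r → Fin C.NN, StrictMono ρκ → StrictMono κκ →
    0 ≤ (((C.Q t).submatrix ρκ κκ).det) := by
  induction t with
  | zero => exact fun ρκ κκ h1 h2 => tp_one ρκ κκ h1 h2
  | succ t ih =>
    intro ρκ κκ h1 h2
    refine tp_mul_step (C.S t) (C.Q t) (fun p q => C.w_nonneg t q p) ?_ ih ρκ κκ h1 h2
    intro p1 q1 p2 q2 hw1 hw2 hq hp
    have hlow := (C.w_support hw1).1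
    exact C.noncross hw1 hw2 hq hp hlow

/-- Strict monotonicity of the extraction maps. -/
lemma endF_mono {i i' : Fin r} (hii : i < i') : C.LH i C.X < C.LH i' C.X := by
  have hgap := gap C.hδσ (C.hρ hii)
  have h1 := C.cap_lt_X i
  have h2 := C.cap_lt_X i'
  simp only [LH, cap] at *
  omega

lemma startF_mono {j j' : Fin r} (hjj : j < j') : C.PH j 0 < C.PH j' 0 := by
  have hgap := gap C.hδσ (C.hκ hjj)
  have h1 : C.δ * C.κ j ≤ C.σ * C.κ j := Nat.mul_le_mul_right _ (le_of_lt C.hδσ)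
  have h2 : C.δ * C.κ j' ≤ C.σ * C.κ j' := Nat.mul_le_mul_right _ (le_of_lt C.hδσ)
  simp only [PH] at *
  omega

/-- Final capture values are exactly the ray Toeplitz entries. -/
lemma capval_toeplitz (i j : Fin r) :
    C.capval i j = (if C.κ j ≤ C.ρ i then
      genDelannoy C.a C.b C.c (C.n + C.δ*(C.ρ i - C.κ j)) (C.k + C.σ*(C.ρ i - C.κ j))
      else 0) := by
  unfold capval
  by_cases hκρ : C.κ j ≤ C.ρ i
  · have hδm : C.δ * (C.ρ i - C.κ j) + C.δ * C.κ j = C.δ * C.ρ i := by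
      rw [← Nat.mul_add]; congr 1; omega
    have hσm : C.σ * (C.ρ i - C.κ j) + C.σ * C.κ j = C.σ * C.ρ i := by
      rw [← Nat.mul_add]; congr 1; omega
    rw [if_pos ⟨by unfold cap; omega, by omega⟩, if_pos hκρ]
    congr 1
    · unfold cap; omega
    · omega
  · rw [if_neg hκρ]
    have hσgt : C.σ * C.ρ i + C.σ ≤ C.σ * C.κ j := by
      have := Nat.mul_le_mul_left C.σ (show C.ρ i + 1 ≤ C.κ j by omega)
      have h2 : C.σ * (C.ρ i + 1) = C.σ * C.ρ i + C.σ := by ring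
      omega
    rw [if_neg (by have := C.hkσ; omega)]

/-- The main minor nonnegativity result. -/
theorem final : 0 ≤ (Matrix.of fun i j : Fin r =>
    (if C.κ j ≤ C.ρ i then
      genDelannoy C.a C.b C.c (C.n + C.δ*(C.ρ i - C.κ j)) (C.k + C.σ*(C.ρ i - C.κ j))
      else 0)).det := by
  have hendN : ∀ i : Fin r, C.LH i C.X < C.NN := fun i => by
    have := C.LH_lt_N i (le_refl C.X); omega
  have hstartN : ∀ j : Fin r, C.PH j 0 < C.NN := fun j => by
    have := C.PH_lt_N j (show 0 ≤ C.X by omega); omega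
  set endF : Fin r → Fin C.NN := fun i => ⟨C.LH i C.X, hendN i⟩ with hendF
  set startF : Fin r → Fin C.NN := fun j => ⟨C.PH j 0, hstartN j⟩ with hstartF
  have hmat : (Matrix.of fun i j : Fin r =>
      (if C.κ j ≤ C.ρ i then
        genDelannoy C.a C.b C.c (C.n + C.δ*(C.ρ i - C.κ j)) (C.k + C.σ*(C.ρ i - C.κ j))
        else 0)) = (C.Q C.X).submatrix endF startF := by
    funext i j
    show _ = (C.Q C.X) (endF i) (startF j)
    rw [C.Q_entry j C.X (endF i) (startF j) rfl]
    show _ = C.u j C.X (C.LH i C.X)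
    rw [(C.inv_all j C.X (le_refl C.X)).2.2.2.1 i (C.cap_lt_X i), C.capval_toeplitz i j]
    rfl
  rw [hmat]
  exact C.Q_tp C.X endF startF (fun i i' h => C.endF_mono h) (fun j j' h => C.startF_mono h)

end Ctx
end DelRay

/-- **Proposition (Toeplitz total positivity along rays of the generalized
Delannoy triangle).**  For nonnegative reals `a, b, c` and naturals
`n, k, δ, σ` with `k ≤ n`, `1 ≤ δ`, `k < σ` and `δ < σ`, the Toeplitz matrix
of the sequence `i ↦ d (n + δ·i) (k + σ·i)` is totally positive; in
particular this sequence is a Pólya frequency sequence. -/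
theorem genDelannoy_ray_toeplitz_totallyPositive (a b c : ℝ)
    (ha : 0 ≤ a) (hb : 0 ≤ b) (hc : 0 ≤ c)
    (n k δ σ : ℕ) (hkn : k ≤ n) (hδ : 1 ≤ δ) (hkσ : k < σ) (hδσ : δ < σ) :
    TPReal (toeplitz fun i => genDelannoy a b c (n + δ * i) (k + σ * i)) := by
  intro r hr ρ κ hρ hκ
  have hfin := DelRay.Ctx.final
    (⟨a, b, c, n, k, δ, σ, ρ, κ, ha, hb, hc, hkn, hδ, hkσ, hδσ, hρ, hκ, by omega⟩ :
      DelRay.Ctx r)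
  have hmat : (Matrix.of fun i j : Fin r =>
      toeplitz (fun i => genDelannoy a b c (n + δ * i) (k + σ * i)) (ρ i) (κ j))
      = Matrix.of (fun i j : Fin r =>
        if κ j ≤ ρ i then genDelannoy a b c (n + δ*(ρ i - κ j)) (k + σ*(ρ i - κ j))
        else 0) := by
    funext i j
    simp [toeplitz]
  rw [hmat]
  exact hfin
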